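/- Let n, p, q be natural numbers with p ≥ 3, q ≥ 1 and p + 2q ≤ n. Let W₁ be the set of all triples {1, 2, i} with 3 ≤ i ≤ p, and let W₂ be the set of all triples {i, p+2(j−1)+1, p+2(j−1)+2} with 3 ≤ i ≤ p and 1 ≤ j ≤ q, viewed as vertices of G(n,3,1). Then W₁ and W₂ are disjoint, |W₁ ∪ W₂| = (p−2)·(1+q), and the number of edges of G(n,3,1) with both endpoints in W₁ ∪ W₂ equals (p−2)·q + (p−2)·q·(q−1)/2. -/

import Mathlib

/-- The vertices of `G(n,3,1)`: 3-element subsets of `{1, …, n}`. -/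
abbrev Vtx (n : ℕ) := {s : Finset ℕ // s ⊆ Finset.Icc 1 n ∧ s.card = 3}

/-- The graph `G(n,3,1)`: two 3-element subsets of `{1, …, n}` are adjacent
iff they intersect in exactly one element. -/
def G (n : ℕ) : SimpleGraph (Vtx n) where
  Adj a b := (a.1 ∩ b.1).card = 1
  symm := ⟨by intro a b h; rwa [Finset.inter_comm]⟩
  loopless := ⟨by intro a h; rw [Finset.inter_self, a.2.2] at h; omega⟩

instance (n : ℕ) : DecidableRel (G n).Adj := fun a b =>
  inferInstanceAs (Decidable ((a.1 ∩ b.1).card = 1))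

instance (n : ℕ) : Fintype (Vtx n) :=
  Fintype.subtype ((Finset.Icc 1 n).powerset.filter fun s => s.card = 3) (by
    intro s
    simp [Finset.mem_powerset, and_comm])

instance (n : ℕ) (s : Set (Vtx n)) : DecidableRel ((G n).induce s).Adj := fun a b =>
  inferInstanceAs (Decidable (((a : Vtx n).1 ∩ (b : Vtx n).1).card = 1))

/-- The number of edges of `G(n,3,1)` with both endpoints in `W`. -/
def edgesIn (n : ℕ) (W : Finset (Vtx n)) : ℕ :=
  ((G n).induce (W : Set (Vtx n))).edgeFinset.card

/-- The independence number of `G(n,3,1)`. -/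
noncomputable def alpha (n : ℕ) : ℕ :=
  sSup {k | ∃ W : Finset (Vtx n), W.card = k ∧ ∀ u ∈ W, ∀ v ∈ W, ¬ (G n).Adj u v}

/-- The minimal number of edges induced on a vertex subset of cardinality `l`. -/
noncomputable def rmin (n l : ℕ) : ℕ :=
  sInf {m | ∃ W : Finset (Vtx n), W.card = l ∧ edgesIn n W = m}



lemma card3' {a b c : ℕ} (hab : a ≠ b) (hac : a ≠ c) (hbc : b ≠ c) :
    ({a, b, c} : Finset ℕ).card = 3 := by
  rw [Finset.card_insert_of_notMem (by simp [hab, hac]),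
    Finset.card_insert_of_notMem (by simp [hbc]), Finset.card_singleton]

lemma cardPair {a b : ℕ} (h : a ≠ b) : ({a, b} : Finset ℕ).card = 2 := by
  rw [Finset.card_insert_of_notMem (by simp [h]), Finset.card_singleton]

def mkVtx (n a b c : ℕ) (h1 : 1 ≤ a) (h2 : a < b) (h3 : b < c) (h4 : c ≤ n) : Vtx n :=
  ⟨{a, b, c}, by
    refine ⟨fun x hx => ?_, card3' (by omega) (by omega) (by omega)⟩
    simp only [Finset.mem_insert, Finset.mem_singleton] at hx
    rw [Finset.mem_Icc]; omega⟩

lemma eqA {i i' : ℕ} (hi : 3 ≤ i) (hi' : 3 ≤ i')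
    (h : ({1, 2, i} : Finset ℕ) = {1, 2, i'}) : i = i' := by
  have : i ∈ ({1, 2, i'} : Finset ℕ) := h ▸ (by simp)
  simp only [Finset.mem_insert, Finset.mem_singleton] at this; omega

lemma eqB {p i i' j j' : ℕ} (hi : 3 ≤ i) (hip : i ≤ p) (hi' : 3 ≤ i') (hip' : i' ≤ p)
    (hj : 1 ≤ j) (hj' : 1 ≤ j')
    (h : ({i, p + 2 * (j - 1) + 1, p + 2 * (j - 1) + 2} : Finset ℕ)
       = {i', p + 2 * (j' - 1) + 1, p + 2 * (j' - 1) + 2}) : i = i' ∧ j = j' := by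
  have h1 : i ∈ ({i', p + 2 * (j' - 1) + 1, p + 2 * (j' - 1) + 2} : Finset ℕ) := h ▸ (by simp)
  have h2 : p + 2 * (j - 1) + 1
      ∈ ({i', p + 2 * (j' - 1) + 1, p + 2 * (j' - 1) + 2} : Finset ℕ) := h ▸ (by simp)
  simp only [Finset.mem_insert, Finset.mem_singleton] at h1 h2; omega

lemma interAB {p i i' j : ℕ} (hi : 3 ≤ i) (hip : i ≤ p) (hi' : 3 ≤ i') (hip' : i' ≤ p)
    (hj : 1 ≤ j) :
    (({1, 2, i} : Finset ℕ) ∩ {i', p + 2 * (j - 1) + 1, p + 2 * (j - 1) + 2}).card = 1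
      ↔ i = i' := by
  constructor
  · intro h
    by_contra hne
    have he : ({1, 2, i} : Finset ℕ) ∩ {i', p + 2 * (j - 1) + 1, p + 2 * (j - 1) + 2} = ∅ := by
      ext a
      simp only [Finset.mem_inter, Finset.mem_insert, Finset.mem_singleton,
        Finset.notMem_empty, iff_false]
      omega
    rw [he] at h; simp at h
  · rintro rfl
    have he : ({1, 2, i} : Finset ℕ) ∩ {i, p + 2 * (j - 1) + 1, p + 2 * (j - 1) + 2} = {i} := by
      ext a
      simp only [Finset.mem_inter, Finset.mem_insert, Finset.mem_singleton]
      omega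
    rw [he, Finset.card_singleton]

lemma interBB {p i i' j j' : ℕ} (hi : 3 ≤ i) (hip : i ≤ p) (hi' : 3 ≤ i') (hip' : i' ≤ p)
    (hj : 1 ≤ j) (hj' : 1 ≤ j') :
    (({i, p + 2 * (j - 1) + 1, p + 2 * (j - 1) + 2} : Finset ℕ)
      ∩ {i', p + 2 * (j' - 1) + 1, p + 2 * (j' - 1) + 2}).card = 1
      ↔ (i = i' ∧ j ≠ j') := by
  constructor
  · intro h
    have hjj : j ≠ j' := by
      rintro rfl
      rcases eq_or_ne i i' with rfl | hne
      · rw [Finset.inter_self, card3' (by omega) (by omega) (by omega)] at h; omega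
      · have he : ({i, p + 2 * (j - 1) + 1, p + 2 * (j - 1) + 2} : Finset ℕ)
            ∩ {i', p + 2 * (j - 1) + 1, p + 2 * (j - 1) + 2}
            = {p + 2 * (j - 1) + 1, p + 2 * (j - 1) + 2} := by
          ext a
          simp only [Finset.mem_inter, Finset.mem_insert, Finset.mem_singleton]
          omega
        rw [he, cardPair (by omega)] at h; omega
    refine ⟨?_, hjj⟩
    by_contra hne
    have he : ({i, p + 2 * (j - 1) + 1, p + 2 * (j - 1) + 2} : Finset ℕ)
        ∩ {i', p + 2 * (j' - 1) + 1, p + 2 * (j' - 1) + 2} = ∅ := by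
      ext a
      simp only [Finset.mem_inter, Finset.mem_insert, Finset.mem_singleton,
        Finset.notMem_empty, iff_false]
      omega
    rw [he] at h; simp at h
  · rintro ⟨rfl, hjj⟩
    have he : ({i, p + 2 * (j - 1) + 1, p + 2 * (j - 1) + 2} : Finset ℕ)
        ∩ {i, p + 2 * (j' - 1) + 1, p + 2 * (j' - 1) + 2} = {i} := by
      ext a
      simp only [Finset.mem_inter, Finset.mem_insert, Finset.mem_singleton]
      omega
    rw [he, Finset.card_singleton]

/-- For `3 ≤ p`, `1 ≤ q`, `p + 2q ≤ n`, let `W₁` be the set of all triples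
`{1, 2, i}` with `3 ≤ i ≤ p` and `W₂` the set of all triples
`{i, p+2(j−1)+1, p+2(j−1)+2}` with `3 ≤ i ≤ p`, `1 ≤ j ≤ q`. Then `W₁` and `W₂`
are disjoint, `|W₁ ∪ W₂| = (p−2)(1+q)`, and `W₁ ∪ W₂` spans exactly
`(p−2)q + (p−2)q(q−1)/2` edges of `G(n,3,1)`. -/
theorem stmt_8 (n p q : ℕ) (hp : 3 ≤ p) (hq : 1 ≤ q) (hpq : p + 2 * q ≤ n)
    (W₁ W₂ : Finset (Vtx n))
    (hW₁ : ∀ v : Vtx n, v ∈ W₁ ↔ ∃ i ∈ Finset.Icc 3 p,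
      v.1 = ({1, 2, i} : Finset ℕ))
    (hW₂ : ∀ v : Vtx n, v ∈ W₂ ↔ ∃ i ∈ Finset.Icc 3 p, ∃ j ∈ Finset.Icc 1 q,
      v.1 = ({i, p + 2 * (j - 1) + 1, p + 2 * (j - 1) + 2} : Finset ℕ)) :
    Disjoint W₁ W₂ ∧ (W₁ ∪ W₂).card = (p - 2) * (1 + q) ∧
      edgesIn n (W₁ ∪ W₂) = (p - 2) * q + (p - 2) * q * (q - 1) / 2 := by
  have hmemIJ : ∀ a : ℕ × ℕ, a ∈ (Finset.Icc 3 p) ×ˢ (Finset.Icc 1 q) →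
      3 ≤ a.1 ∧ a.1 ≤ p ∧ 1 ≤ a.2 ∧ a.2 ≤ q := by
    intro a ha
    rw [Finset.mem_product, Finset.mem_Icc, Finset.mem_Icc] at ha
    exact ⟨ha.1.1, ha.1.2, ha.2.1, ha.2.2⟩
  have hmemIJJ : ∀ a : ℕ × ℕ × ℕ, a ∈ (Finset.Icc 3 p) ×ˢ (Finset.Icc 1 q).offDiag →
      3 ≤ a.1 ∧ a.1 ≤ p ∧ 1 ≤ a.2.1 ∧ a.2.1 ≤ q ∧ 1 ≤ a.2.2 ∧ a.2.2 ≤ q ∧ a.2.1 ≠ a.2.2 := by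
    intro a ha
    simp only [Finset.mem_product, Finset.mem_offDiag, Finset.mem_Icc] at ha
    exact ⟨ha.1.1, ha.1.2, ha.2.1.1, ha.2.1.2, ha.2.2.1.1, ha.2.2.1.2, ha.2.2.2⟩
  have hdisj : Disjoint W₁ W₂ := by
    rw [Finset.disjoint_left]
    intro v hv1 hv2
    obtain ⟨i, hi, h1⟩ := (hW₁ v).mp hv1
    obtain ⟨i', hi', j, hj, h2⟩ := (hW₂ v).mp hv2
    rw [Finset.mem_Icc] at hi hi'
    have hm : (1 : ℕ) ∈ v.1 := by rw [h1]; simp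
    rw [h2] at hm
    simp only [Finset.mem_insert, Finset.mem_singleton] at hm
    omega
  have hc1 : W₁.card = p - 2 := by
    have hb := Finset.card_bij (s := Finset.Icc 3 p) (t := W₁)
      (fun i hi => mkVtx n 1 2 i (by omega) (by omega)
        (by rw [Finset.mem_Icc] at hi; omega) (by rw [Finset.mem_Icc] at hi; omega))
      (fun i hi => (hW₁ _).mpr ⟨i, hi, rfl⟩)
      (fun a ha b hb h => by
        rw [Finset.mem_Icc] at ha hb
        exact eqA (by omega) (by omega) (congrArg Subtype.val h))
      (fun v hv => by
        obtain ⟨i, hi, he⟩ := (hW₁ v).mp hv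
        exact ⟨i, hi, Subtype.ext he.symm⟩)
    rw [← hb, Nat.card_Icc]; omega
  have hc2 : W₂.card = (p - 2) * q := by
    have hb := Finset.card_bij (s := (Finset.Icc 3 p) ×ˢ (Finset.Icc 1 q)) (t := W₂)
      (fun a ha => mkVtx n a.1 (p + 2 * (a.2 - 1) + 1) (p + 2 * (a.2 - 1) + 2)
        (by have := hmemIJ a ha; omega) (by have := hmemIJ a ha; omega)
        (by omega) (by have := hmemIJ a ha; omega))
      (fun a ha => (hW₂ _).mpr ⟨a.1, (Finset.mem_product.mp ha).1, a.2,
        (Finset.mem_product.mp ha).2, rfl⟩)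
      (fun a ha b hb h => by
        have ha' := hmemIJ a ha; have hb' := hmemIJ b hb
        have h' := eqB ha'.1 ha'.2.1 hb'.1 hb'.2.1 ha'.2.2.1 hb'.2.2.1
          (congrArg Subtype.val h)
        exact Prod.ext h'.1 h'.2)
      (fun v hv => by
        obtain ⟨i, hi, j, hj, he⟩ := (hW₂ v).mp hv
        exact ⟨(i, j), Finset.mem_product.mpr ⟨hi, hj⟩, Subtype.ext he.symm⟩)
    rw [← hb, Finset.card_product, Nat.card_Icc, Nat.card_Icc]
    congr 1 <;> omega
  have hcu : (W₁ ∪ W₂).card = (p - 2) * (1 + q) := by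
    rw [Finset.card_union_of_disjoint hdisj, hc1, hc2, Nat.mul_add, Nat.mul_one]
  refine ⟨hdisj, hcu, ?_⟩
  -- edge counting
  have c11 : ((W₁ ×ˢ W₁).filter fun e : Vtx n × Vtx n => (e.1.1 ∩ e.2.1).card = 1) = ∅ := by
    rw [Finset.filter_eq_empty_iff]
    rintro ⟨u, v⟩ huv
    rw [Finset.mem_product] at huv
    obtain ⟨i, hi, hu⟩ := (hW₁ u).mp huv.1
    obtain ⟨i', hi', hv⟩ := (hW₁ v).mp huv.2
    rw [Finset.mem_Icc] at hi hi'
    show ¬ (u.1 ∩ v.1).card = 1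
    rw [hu, hv]
    intro h
    have hsub : ({1, 2} : Finset ℕ) ⊆ ({1, 2, i} : Finset ℕ) ∩ {1, 2, i'} := by
      intro x hx
      simp only [Finset.mem_insert, Finset.mem_singleton] at hx
      simp only [Finset.mem_inter, Finset.mem_insert, Finset.mem_singleton]
      omega
    have hle := Finset.card_le_card hsub
    rw [h, cardPair (by omega)] at hle
    omega
  have c12 : ((W₁ ×ˢ W₂).filter fun e : Vtx n × Vtx n => (e.1.1 ∩ e.2.1).card = 1).card
      = (p - 2) * q := by
    have hb := Finset.card_bij (s := (Finset.Icc 3 p) ×ˢ (Finset.Icc 1 q))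
      (t := (W₁ ×ˢ W₂).filter fun e : Vtx n × Vtx n => (e.1.1 ∩ e.2.1).card = 1)
      (fun a ha =>
        (mkVtx n 1 2 a.1 (by omega) (by omega)
          (by have := hmemIJ a ha; omega) (by have := hmemIJ a ha; omega),
         mkVtx n a.1 (p + 2 * (a.2 - 1) + 1) (p + 2 * (a.2 - 1) + 2)
          (by have := hmemIJ a ha; omega) (by have := hmemIJ a ha; omega)
          (by omega) (by have := hmemIJ a ha; omega)))
      (fun a ha => by
        have hb' := hmemIJ a ha
        rw [Finset.mem_filter, Finset.mem_product]
        refine ⟨⟨(hW₁ _).mpr ⟨a.1, (Finset.mem_product.mp ha).1, rfl⟩,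
          (hW₂ _).mpr ⟨a.1, (Finset.mem_product.mp ha).1, a.2,
            (Finset.mem_product.mp ha).2, rfl⟩⟩, ?_⟩
        show (({1, 2, a.1} : Finset ℕ)
          ∩ {a.1, p + 2 * (a.2 - 1) + 1, p + 2 * (a.2 - 1) + 2}).card = 1
        exact (interAB hb'.1 hb'.2.1 hb'.1 hb'.2.1 hb'.2.2.1).mpr rfl)
      (fun a ha b hb h => by
        have ha' := hmemIJ a ha; have hb' := hmemIJ b hb
        have h1 := congrArg (fun x : Vtx n × Vtx n => x.1.1) h
        have h2 := congrArg (fun x : Vtx n × Vtx n => x.2.1) h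
        have e1 := eqA ha'.1 hb'.1 h1
        have e2 := eqB ha'.1 ha'.2.1 hb'.1 hb'.2.1 ha'.2.2.1 hb'.2.2.1 h2
        exact Prod.ext e1 e2.2)
      (fun v hv => by
        rw [Finset.mem_filter, Finset.mem_product] at hv
        obtain ⟨⟨hv1, hv2⟩, hadj⟩ := hv
        obtain ⟨i, hi, hu⟩ := (hW₁ v.1).mp hv1
        obtain ⟨i', hi', j, hj, hvv⟩ := (hW₂ v.2).mp hv2
        have hii : i ∈ Finset.Icc 3 p := hi
        have hjj : j ∈ Finset.Icc 1 q := hj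
        rw [Finset.mem_Icc] at hi hi' hj
        have hadj' : (({1, 2, i} : Finset ℕ)
            ∩ {i', p + 2 * (j - 1) + 1, p + 2 * (j - 1) + 2}).card = 1 := by
          rw [← hu, ← hvv]; exact hadj
        have hie : i = i' := (interAB hi.1 hi.2 hi'.1 hi'.2 hj.1).mp hadj'
        subst hie
        refine ⟨(i, j), Finset.mem_product.mpr ⟨hii, hjj⟩, ?_⟩
        exact Prod.ext (Subtype.ext hu.symm) (Subtype.ext hvv.symm))
    rw [← hb, Finset.card_product, Nat.card_Icc, Nat.card_Icc]
    congr 1 <;> omega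
  have c21 : ((W₂ ×ˢ W₁).filter fun e : Vtx n × Vtx n => (e.1.1 ∩ e.2.1).card = 1).card
      = (p - 2) * q := by
    have hb := Finset.card_bij (s := (Finset.Icc 3 p) ×ˢ (Finset.Icc 1 q))
      (t := (W₂ ×ˢ W₁).filter fun e : Vtx n × Vtx n => (e.1.1 ∩ e.2.1).card = 1)
      (fun a ha =>
        (mkVtx n a.1 (p + 2 * (a.2 - 1) + 1) (p + 2 * (a.2 - 1) + 2)
          (by have := hmemIJ a ha; omega) (by have := hmemIJ a ha; omega)
          (by omega) (by have := hmemIJ a ha; omega),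
         mkVtx n 1 2 a.1 (by omega) (by omega)
          (by have := hmemIJ a ha; omega) (by have := hmemIJ a ha; omega)))
      (fun a ha => by
        have hb' := hmemIJ a ha
        rw [Finset.mem_filter, Finset.mem_product]
        refine ⟨⟨(hW₂ _).mpr ⟨a.1, (Finset.mem_product.mp ha).1, a.2,
            (Finset.mem_product.mp ha).2, rfl⟩,
          (hW₁ _).mpr ⟨a.1, (Finset.mem_product.mp ha).1, rfl⟩⟩, ?_⟩
        show (({a.1, p + 2 * (a.2 - 1) + 1, p + 2 * (a.2 - 1) + 2} : Finset ℕ)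
          ∩ {1, 2, a.1}).card = 1
        rw [Finset.inter_comm]
        exact (interAB hb'.1 hb'.2.1 hb'.1 hb'.2.1 hb'.2.2.1).mpr rfl)
      (fun a ha b hb h => by
        have ha' := hmemIJ a ha; have hb' := hmemIJ b hb
        have h1 := congrArg (fun x : Vtx n × Vtx n => x.1.1) h
        have h2 := congrArg (fun x : Vtx n × Vtx n => x.2.1) h
        have e1 := eqA ha'.1 hb'.1 h2
        have e2 := eqB ha'.1 ha'.2.1 hb'.1 hb'.2.1 ha'.2.2.1 hb'.2.2.1 h1
        exact Prod.ext e1 e2.2)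
      (fun v hv => by
        rw [Finset.mem_filter, Finset.mem_product] at hv
        obtain ⟨⟨hv1, hv2⟩, hadj⟩ := hv
        obtain ⟨i, hi, j, hj, hu⟩ := (hW₂ v.1).mp hv1
        obtain ⟨i', hi', hvv⟩ := (hW₁ v.2).mp hv2
        have hii : i ∈ Finset.Icc 3 p := hi
        have hjj : j ∈ Finset.Icc 1 q := hj
        rw [Finset.mem_Icc] at hi hi' hj
        have hadj' : (({1, 2, i'} : Finset ℕ)
            ∩ {i, p + 2 * (j - 1) + 1, p + 2 * (j - 1) + 2}).card = 1 := by
          rw [Finset.inter_comm, ← hu, ← hvv]; exact hadj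
        have hie : i' = i := (interAB hi'.1 hi'.2 hi.1 hi.2 hj.1).mp hadj'
        subst hie
        refine ⟨(i', j), Finset.mem_product.mpr ⟨hii, hjj⟩, ?_⟩
        exact Prod.ext (Subtype.ext hu.symm) (Subtype.ext hvv.symm))
    rw [← hb, Finset.card_product, Nat.card_Icc, Nat.card_Icc]
    congr 1 <;> omega
  have c22 : ((W₂ ×ˢ W₂).filter fun e : Vtx n × Vtx n => (e.1.1 ∩ e.2.1).card = 1).card
      = (p - 2) * (q * q - q) := by
    have hb := Finset.card_bij (s := (Finset.Icc 3 p) ×ˢ (Finset.Icc 1 q).offDiag)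
      (t := (W₂ ×ˢ W₂).filter fun e : Vtx n × Vtx n => (e.1.1 ∩ e.2.1).card = 1)
      (fun a ha =>
        (mkVtx n a.1 (p + 2 * (a.2.1 - 1) + 1) (p + 2 * (a.2.1 - 1) + 2)
          (by have := hmemIJJ a ha; omega) (by have := hmemIJJ a ha; omega)
          (by omega) (by have := hmemIJJ a ha; omega),
         mkVtx n a.1 (p + 2 * (a.2.2 - 1) + 1) (p + 2 * (a.2.2 - 1) + 2)
          (by have := hmemIJJ a ha; omega) (by have := hmemIJJ a ha; omega)
          (by omega) (by have := hmemIJJ a ha; omega)))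
      (fun a ha => by
        have hb' := hmemIJJ a ha
        rw [Finset.mem_filter, Finset.mem_product]
        refine ⟨⟨(hW₂ _).mpr ⟨a.1, Finset.mem_Icc.mpr ⟨hb'.1, hb'.2.1⟩, a.2.1,
            Finset.mem_Icc.mpr ⟨hb'.2.2.1, hb'.2.2.2.1⟩, rfl⟩,
          (hW₂ _).mpr ⟨a.1, Finset.mem_Icc.mpr ⟨hb'.1, hb'.2.1⟩, a.2.2,
            Finset.mem_Icc.mpr ⟨hb'.2.2.2.2.1, hb'.2.2.2.2.2.1⟩, rfl⟩⟩, ?_⟩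
        show (({a.1, p + 2 * (a.2.1 - 1) + 1, p + 2 * (a.2.1 - 1) + 2} : Finset ℕ)
          ∩ {a.1, p + 2 * (a.2.2 - 1) + 1, p + 2 * (a.2.2 - 1) + 2}).card = 1
        exact (interBB hb'.1 hb'.2.1 hb'.1 hb'.2.1 hb'.2.2.1 hb'.2.2.2.2.1).mpr
          ⟨rfl, hb'.2.2.2.2.2.2⟩)
      (fun a ha b hb h => by
        have ha' := hmemIJJ a ha; have hb' := hmemIJJ b hb
        have h1 := congrArg (fun x : Vtx n × Vtx n => x.1.1) h
        have h2 := congrArg (fun x : Vtx n × Vtx n => x.2.1) h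
        have e1 := eqB ha'.1 ha'.2.1 hb'.1 hb'.2.1 ha'.2.2.1 hb'.2.2.1 h1
        have e2 := eqB ha'.1 ha'.2.1 hb'.1 hb'.2.1 ha'.2.2.2.2.1 hb'.2.2.2.2.1 h2
        exact Prod.ext e1.1 (Prod.ext e1.2 e2.2))
      (fun v hv => by
        rw [Finset.mem_filter, Finset.mem_product] at hv
        obtain ⟨⟨hv1, hv2⟩, hadj⟩ := hv
        obtain ⟨i, hi, j, hj, hu⟩ := (hW₂ v.1).mp hv1
        obtain ⟨i', hi', j', hj', hvv⟩ := (hW₂ v.2).mp hv2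
        rw [Finset.mem_Icc] at hi hi' hj hj'
        have hadj' : (({i, p + 2 * (j - 1) + 1, p + 2 * (j - 1) + 2} : Finset ℕ)
            ∩ {i', p + 2 * (j' - 1) + 1, p + 2 * (j' - 1) + 2}).card = 1 := by
          rw [← hu, ← hvv]; exact hadj
        obtain ⟨hie, hjne⟩ :=
          (interBB hi.1 hi.2 hi'.1 hi'.2 hj.1 hj'.1).mp hadj'
        subst hie
        refine ⟨(i, (j, j')), ?_, ?_⟩
        · rw [Finset.mem_product, Finset.mem_offDiag]
          exact ⟨Finset.mem_Icc.mpr hi, Finset.mem_Icc.mpr hj, Finset.mem_Icc.mpr hj', hjne⟩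
        · exact Prod.ext (Subtype.ext hu.symm) (Subtype.ext hvv.symm))
    rw [← hb, Finset.card_product, Finset.offDiag_card, Nat.card_Icc, Nat.card_Icc]
    have e1 : p + 1 - 3 = p - 2 := by omega
    have e2 : q + 1 - 1 = q := by omega
    rw [e1, e2]
  -- disjointness of the product pieces
  have hdfst : ∀ (A B C D : Finset (Vtx n)), Disjoint A C → Disjoint (A ×ˢ B) (C ×ˢ D) := by
    intro A B C D h
    rw [Finset.disjoint_left]
    intro e he1 he2
    rw [Finset.mem_product] at he1 he2
    exact (Finset.disjoint_left.mp h he1.1) he2.1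
  have hdsnd : ∀ (A B C D : Finset (Vtx n)), Disjoint B D → Disjoint (A ×ˢ B) (C ×ˢ D) := by
    intro A B C D h
    rw [Finset.disjoint_left]
    intro e he1 he2
    rw [Finset.mem_product] at he1 he2
    exact (Finset.disjoint_left.mp h he1.2) he2.2
  have hsplit : (((W₁ ∪ W₂) ×ˢ (W₁ ∪ W₂)).filter
      fun e : Vtx n × Vtx n => (e.1.1 ∩ e.2.1).card = 1).card
      = (p - 2) * q + ((p - 2) * q + (p - 2) * (q * q - q)) := by
    rw [Finset.union_product, Finset.product_union, Finset.product_union,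
      Finset.filter_union, Finset.filter_union, Finset.filter_union, c11,
      Finset.empty_union]
    rw [Finset.card_union_of_disjoint (Finset.disjoint_union_right.mpr
        ⟨Finset.disjoint_filter_filter (hdfst _ _ _ _ hdisj),
         Finset.disjoint_filter_filter (hdfst _ _ _ _ hdisj)⟩),
      Finset.card_union_of_disjoint
        (Finset.disjoint_filter_filter (hdsnd _ _ _ _ hdisj)),
      c12, c21, c22]
  -- relate to the induced subgraph's edge count
  have h2m := SimpleGraph.two_mul_card_edgeFinset
    (G := (G n).induce ((W₁ ∪ W₂ : Finset (Vtx n)) : Set (Vtx n)))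
  have hbij : (Finset.univ.filter fun x :
        ((W₁ ∪ W₂ : Finset (Vtx n)) : Set (Vtx n)) × ((W₁ ∪ W₂ : Finset (Vtx n)) : Set (Vtx n)) =>
        ((G n).induce ((W₁ ∪ W₂ : Finset (Vtx n)) : Set (Vtx n))).Adj x.1 x.2).card
      = (((W₁ ∪ W₂) ×ˢ (W₁ ∪ W₂)).filter
          fun e : Vtx n × Vtx n => (e.1.1 ∩ e.2.1).card = 1).card := by
    apply Finset.card_bij (fun a _ => ((a.1 : Vtx n), (a.2 : Vtx n)))
    · rintro ⟨u, v⟩ ha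
      rw [Finset.mem_filter] at ha ⊢
      exact ⟨Finset.mem_product.mpr ⟨Finset.mem_coe.mp u.2, Finset.mem_coe.mp v.2⟩, ha.2⟩
    · rintro ⟨u, v⟩ _ ⟨u', v'⟩ _ h
      obtain ⟨h1, h2⟩ := Prod.ext_iff.mp h
      exact Prod.ext (Subtype.ext h1) (Subtype.ext h2)
    · rintro ⟨u, v⟩ hb
      rw [Finset.mem_filter, Finset.mem_product] at hb
      refine ⟨(⟨u, Finset.mem_coe.mpr hb.1.1⟩, ⟨v, Finset.mem_coe.mpr hb.1.2⟩), ?_, rfl⟩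
      rw [Finset.mem_filter]
      exact ⟨Finset.mem_univ _, hb.2⟩
  have hfilter_eq : (Finset.univ.filter fun x :
        ((W₁ ∪ W₂ : Finset (Vtx n)) : Set (Vtx n)) × ((W₁ ∪ W₂ : Finset (Vtx n)) : Set (Vtx n)) =>
        ((G n).induce ((W₁ ∪ W₂ : Finset (Vtx n)) : Set (Vtx n))).Adj x.1 x.2)
      = (Finset.univ.filter fun (x, y) =>
        ((G n).induce ((W₁ ∪ W₂ : Finset (Vtx n)) : Set (Vtx n))).Adj x y) := by
    apply Finset.filter_congr
    rintro ⟨x, y⟩ _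
    exact Iff.rfl
  have hE : 2 * edgesIn n (W₁ ∪ W₂)
      = (p - 2) * q + ((p - 2) * q + (p - 2) * (q * q - q)) := by
    have : 2 * edgesIn n (W₁ ∪ W₂) = (Finset.univ.filter fun (x, y) =>
        ((G n).induce ((W₁ ∪ W₂ : Finset (Vtx n)) : Set (Vtx n))).Adj x y).card := h2m
    rw [this, ← hfilter_eq, hbij, hsplit]
  -- final arithmetic
  have hev : Even ((q - 1) * q) := by
    have h := Nat.even_mul_succ_self (q - 1)
    rwa [show q - 1 + 1 = q by omega] at h
  obtain ⟨k, hk⟩ := hev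
  have hk' : q * (q - 1) = 2 * k := by rw [Nat.mul_comm]; omega
  have hqq : q * q - q = q * (q - 1) := by
    obtain ⟨m, rfl⟩ : ∃ m, q = m + 1 := ⟨q - 1, by omega⟩
    rw [Nat.add_sub_cancel, Nat.mul_succ, Nat.add_sub_cancel]
  have hrw : (p - 2) * q * (q - 1) = 2 * ((p - 2) * k) := by
    rw [Nat.mul_assoc, hk']; ring
  rw [hrw, Nat.mul_div_cancel_left _ (by norm_num : 0 < 2)]
  have hfin : 2 * edgesIn n (W₁ ∪ W₂) = 2 * ((p - 2) * q + (p - 2) * k) := by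
    rw [hE, hqq, hk']; ring
  exact Nat.eq_of_mul_eq_mul_left (by norm_num) hfin
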